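/- In the hypergraph on the p-subsets of a 2p-set with edges E_s = {A : s ∈ A} for s ∈ S and all weights 1, the assignment x_{E_s} = 1/p for all s ∈ S is a fractional edge-cover, and it is optimal: the minimum total weight of a fractional edge-cover equals 2, so σ* = 2/C(2p,p) while σ = (p+1)/C(2p,p). -/

import Mathlib

open Finset

lemma aux_sum_const (p : ℕ) (hp : 1 ≤ p) {S : Type*} [DecidableEq S]
    (A : Finset S) (hA : A.card = p) : ∑ s ∈ A, (1 / p : ℝ) = 1 := by
  rw [Finset.sum_const, hA, nsmul_eq_mul]
  field_simp

lemma aux_lb {S : Type*} [Fintype S] [DecidableEq S] (p : ℕ) (hp : 1 ≤ p)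
    (hcard : Fintype.card S = 2 * p) (x : S → ℝ) (hx0 : ∀ s, 0 ≤ x s)
    (hxc : ∀ A : Finset S, A.card = p → 1 ≤ ∑ s ∈ A, x s) :
    2 ≤ ∑ s : S, x s := by
  obtain ⟨A, hAsub, hA⟩ := Finset.exists_subset_card_eq (show p ≤ (Finset.univ : Finset S).card from
    (by simp [hcard]; omega))
  have hAc : Aᶜ.card = p := by
    rw [Finset.card_compl, hA, hcard]; omega
  have := hxc A hA
  have := hxc Aᶜ hAc
  have hsplit : ∑ s ∈ Aᶜ, x s + ∑ s ∈ A, x s = ∑ s : S, x s :=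
    Finset.sum_compl_add_sum A x
  linarith

/-- in the hypergraph on the `p`-subsets of a `2p`-set with edges
`E_s = {A : s ∈ A}` and all weights `1`, the assignment `x_{E_s} = 1/p` is a fractional
edge-cover, the minimum total weight of a fractional edge-cover is `2`, and hence
`σ* = 2/C(2p,p)` while `σ = (p+1)/C(2p,p)` (with `n = C(2p,p)` vertices). -/
theorem stmt16 {S : Type*} [Fintype S] [DecidableEq S] (p : ℕ) (hp : 1 ≤ p)
    (hcard : Fintype.card S = 2 * p) :
    ((∀ s : S, (0:ℝ) ≤ 1 / p) ∧
      ∀ A : Finset S, A.card = p → 1 ≤ ∑ s ∈ A, (1 / p : ℝ)) ∧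
    IsLeast {c : ℝ | ∃ x : S → ℝ, (∀ s, 0 ≤ x s) ∧
        (∀ A : Finset S, A.card = p → 1 ≤ ∑ s ∈ A, x s) ∧
        c = ∑ s : S, x s} 2 ∧
    sInf {c : ℝ | ∃ x : S → ℝ, (∀ s, 0 ≤ x s) ∧
        (∀ A : Finset S, A.card = p → 1 ≤ ∑ s ∈ A, x s) ∧
        c = (∑ s : S, x s) / ((2 * p).choose p : ℝ)} = 2 / ((2 * p).choose p : ℝ) ∧
    sInf {c : ℝ | ∃ T : Finset S,
        (∀ A : Finset S, A.card = p → (A ∩ T).Nonempty) ∧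
        c = (T.card : ℝ) / ((2 * p).choose p : ℝ)} =
      ((p : ℝ) + 1) / ((2 * p).choose p : ℝ) := by
  have hp0 : (p : ℝ) ≠ 0 := Nat.cast_ne_zero.mpr (by omega)
  have hC : (0 : ℝ) < ((2 * p).choose p : ℝ) := by
    exact_mod_cast Nat.choose_pos (by omega)
  have hxval : ∑ s : S, (1 / p : ℝ) = 2 := by
    rw [Finset.sum_const, Finset.card_univ, hcard, nsmul_eq_mul]
    push_cast
    field_simp
  have hfeas : ∀ A : Finset S, A.card = p → (1:ℝ) ≤ ∑ s ∈ A, (1 / p : ℝ) := by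
    intro A hA
    rw [aux_sum_const p hp A hA]
  refine ⟨⟨fun s => by positivity, hfeas⟩, ⟨⟨(fun s => 1/p), fun s => by positivity,
      hfeas, hxval.symm⟩, ?_⟩, ?_, ?_⟩
  · rintro c ⟨x, hx0, hxc, rfl⟩
    exact aux_lb p hp hcard x hx0 hxc
  · apply IsLeast.csInf_eq
    constructor
    · exact ⟨(fun s => 1/p), fun s => by positivity, hfeas, by rw [hxval]⟩
    · rintro c ⟨x, hx0, hxc, rfl⟩
      have := aux_lb p hp hcard x hx0 hxc
      gcongr
  · apply IsLeast.csInf_eq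
    constructor
    · obtain ⟨T, hTsub, hT⟩ := Finset.exists_subset_card_eq (show p + 1 ≤ (Finset.univ : Finset S).card from
        (by simp [hcard]; omega))
      refine ⟨T, ?_, by rw [hT]; push_cast; ring⟩
      intro A hA
      rw [← Finset.card_pos]
      have h1 : (A ∩ T).card + (A ∪ T).card = A.card + T.card :=
        Finset.card_inter_add_card_union A T
      have h2 : (A ∪ T).card ≤ Fintype.card S := Finset.card_le_univ _
      omega
    · rintro c ⟨T, hT, rfl⟩
      have hTcard : p + 1 ≤ T.card := by
        by_contra h
        push_neg at h
        have hcc : p ≤ Tᶜ.card := by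
          rw [Finset.card_compl, hcard]; omega
        obtain ⟨A, hAsub, hA⟩ := Finset.exists_subset_card_eq hcc
        obtain ⟨a, ha⟩ := hT A hA
        rw [Finset.mem_inter] at ha
        exact (Finset.mem_compl.mp (hAsub ha.1)) ha.2
      gcongr
      exact_mod_cast hTcard
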